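/- Let K/ℚ be a finite Galois extension of degree D, c ∈ ℚ, d ≥ 2, and let (z₀, …, z_{N−1}) be a cycle of exact period N > 1 of φ(z) = z^d + c contained in K. Suppose τ ∈ Gal(K/ℚ) and j ∈ {1, …, N−1} satisfy τ(z₀) = φ^j(z₀). Then N divides j·D, and hence j is a multiple of N / gcd(N, D). -/

import Mathlib

/-- If τ ∈ Gal(K/ℚ) satisfies τ(z₀) = φ^j(z₀) on a cycle of exact period
N > 1 of φ(z) = z^d + c, with K/ℚ Galois of degree D, then N ∣ j·D and
hence N / gcd(N, D) divides j. -/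
theorem stmt_3 (K : Type*) [Field K] [CharZero K] [FiniteDimensional ℚ K]
    [IsGalois ℚ K] (D : ℕ) (hD : D = Module.finrank ℚ K)
    (d : ℕ) (hd : 2 ≤ d) (c : ℚ) (N : ℕ) (hN : 1 < N) [NeZero N]
    (z : ZMod N → K)
    (hcycle : ∀ k : ZMod N, (z k) ^ d + (c : K) = z (k + 1))
    (hdist : Function.Injective z)
    (τ : K ≃ₐ[ℚ] K) (j : ℕ) (hj : 1 ≤ j ∧ j < N)
    (hτ : τ (z 0) = (fun w : K => w ^ d + (c : K))^[j] (z 0)) :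
    N ∣ j * D ∧ (N / Nat.gcd N D) ∣ j := by
  set f : K → K := fun w => w ^ d + (c : K) with hf
  -- iterating f along the cycle
  have hiter : ∀ (n : ℕ) (m : ZMod N), f^[n] (z m) = z (m + n) := by
    intro n
    induction n with
    | zero => intro m; simp
    | succ n ih =>
      intro m
      rw [Function.iterate_succ_apply', ih]
      have := hcycle (m + n)
      simp only [hf] at this ⊢
      rw [this]
      push_cast
      ring_nf
  -- τ commutes with f
  have hcomm : ∀ w : K, τ (f w) = f (τ w) := by
    intro w
    simp [hf]
  have hcommit : ∀ (n : ℕ) (w : K), τ (f^[n] w) = f^[n] (τ w) := by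
    intro n
    induction n with
    | zero => intro w; simp
    | succ n ih =>
      intro w
      rw [Function.iterate_succ_apply', Function.iterate_succ_apply', hcomm, ih]
  have hτ0 : τ (z 0) = z j := by
    rw [hτ, hiter j 0, zero_add]
  -- τ shifts the whole cycle by j
  have hτm : ∀ m : ZMod N, τ (z m) = z (m + j) := by
    intro m
    have hm : z m = f^[m.val] (z 0) := by
      rw [hiter m.val 0, zero_add, ZMod.natCast_val, ZMod.cast_id]
    rw [hm, hcommit, hτ0, hiter, ZMod.natCast_val, ZMod.cast_id, add_comm]
  -- τ^[k] (z 0) = z (k * j)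
  have hτk : ∀ k : ℕ, (τ ^ k) (z 0) = z (k * j) := by
    intro k
    induction k with
    | zero => simp
    | succ k ih =>
      rw [pow_succ', AlgEquiv.mul_apply, ih, hτm]
      push_cast
      ring_nf
  -- τ^D = 1
  have hordD : (τ : K ≃ₐ[ℚ] K) ^ D = 1 := by
    rw [hD, ← IsGalois.card_aut_eq_finrank ℚ K]
    exact pow_card_eq_one'
  have hDj : z ((D * j : ℕ) : ZMod N) = z 0 := by
    have := hτk D
    rw [hordD] at this
    simp at this
    rw [this]
    push_cast
    ring_nf
  have hd1 : N ∣ j * D := by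
    have := hdist hDj
    rw [mul_comm]
    exact_mod_cast (ZMod.natCast_eq_zero_iff _ _).mp this
  refine ⟨hd1, ?_⟩
  have hg : 0 < Nat.gcd N D := Nat.gcd_pos_of_pos_left D (by omega)
  have hcop : Nat.Coprime (N / Nat.gcd N D) (D / Nat.gcd N D) :=
    Nat.coprime_div_gcd_div_gcd hg
  refine hcop.dvd_of_dvd_mul_right ?_
  obtain ⟨m, hm⟩ := hd1
  refine ⟨m, ?_⟩
  set g := Nat.gcd N D with hgdef
  have hDg : g ∣ D := Nat.gcd_dvd_right N D
  have hNg : g ∣ N := Nat.gcd_dvd_left N D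
  obtain ⟨D', hD'⟩ := hDg
  obtain ⟨N', hN'⟩ := hNg
  have hDq : D / g = D' := by rw [hD', Nat.mul_div_cancel_left _ hg]
  have hNq : N / g = N' := by rw [hN', Nat.mul_div_cancel_left _ hg]
  rw [hDq, hNq]
  have hmm : j * (g * D') = g * N' * m := by rw [← hD', ← hN']; exact hm
  have key : g * (j * D') = g * (N' * m) := by
    calc g * (j * D') = j * (g * D') := by ring
    _ = g * N' * m := hmm
    _ = g * (N' * m) := by ring
  exact Nat.eq_of_mul_eq_mul_left hg key
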